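/- Let X be a real Banach space, let A ⊆ X be a nonempty, closed, convex and bounded set, let f : X → ℝ ∪ {+∞} be lower semicontinuous, let a ∈ dom f, and let r ∈ ℝ satisfy r ≤ inf_{x∈A} f(x). Then there exists a point x̄ in the multidirectional interval [a,A] such that f(x̄) ≤ max{f(a), r} and f⁻(x̄; A − a) ≥ r − f(a). -/

import Mathlib

open Filter Set
open scoped Pointwise

/-- The multidirectional interval `[a, A] = {a + t • (x - a) : t ∈ [0,1], x ∈ A}`. -/
def mdInterval {X : Type*} [AddCommGroup X] [Module ℝ X] (a : X) (A : Set X) : Set X :=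
  {y | ∃ t ∈ Set.Icc (0 : ℝ) 1, ∃ x ∈ A, y = a + t • (x - a)}

/-- The `A`-directional derivative
`f⁻(x; A) = liminf_{t ↓ 0} (inf f(x + t A) - f x) / t`, with values in `EReal`. -/
noncomputable def mdDeriv {Y : Type*} [NormedAddCommGroup Y] [NormedSpace ℝ Y]
    (f : Y → EReal) (x : Y) (A : Set Y) : EReal :=
  Filter.liminf
    (fun t : ℝ => ((t⁻¹ : ℝ) : EReal) * (sInf (f '' ((fun v => x + t • v) '' A)) - f x))
    (nhdsWithin 0 (Set.Ioi 0))

theorem primal_clarke_ledyaev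
    {X : Type*} [NormedAddCommGroup X] [NormedSpace ℝ X] [CompleteSpace X]
    (A : Set X) (hA : A.Nonempty) (hAcl : IsClosed A) (hAconv : Convex ℝ A)
    (hAbd : Bornology.IsBounded A)
    (f : X → EReal) (hf : LowerSemicontinuous f) (hfbot : ∀ x, f x ≠ ⊥)
    (a : X) (ha : f a ≠ ⊤)
    (r : ℝ) (hr : ∀ x ∈ A, (r : EReal) ≤ f x) :
    ∃ xbar ∈ mdInterval a A,
      f xbar ≤ max (f a) (r : EReal) ∧
      (r : EReal) - f a ≤ mdDeriv f xbar ((fun x => x - a) '' A) := by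
  obtain ⟨α, hα⟩ : ∃ α : ℝ, f a = (α : EReal) :=
    ⟨(f a).toReal, (EReal.coe_toReal ha (hfbot a)).symm⟩
  set c : ℝ := r - α with hc
  set B : Set X := (fun x => x - a) '' A with hB
  have hBne : B.Nonempty := hA.image _
  have hBcl : IsClosed B := by
    have : B = (Homeomorph.subRight a) '' A := rfl
    rw [this, Homeomorph.isClosed_image]
    exact hAcl
  have hBconv : Convex ℝ B := by
    have : B = (fun x => -a + x) '' A := by
      ext y; simp [hB, sub_eq_neg_add]
    rw [this]
    exact hAconv.translate (-a)
  obtain ⟨D, hD⟩ : ∃ D : ℝ, ∀ b ∈ B, ‖b‖ ≤ D := by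
    obtain ⟨R, hR⟩ := hAbd.exists_norm_le
    refine ⟨R + ‖a‖, ?_⟩
    rintro b ⟨x, hx, rfl⟩
    have h1 : ‖x - a‖ ≤ ‖x‖ + ‖a‖ := norm_sub_le _ _
    have h2 := hR x hx
    simpa using h1.trans (by linarith)
  -- the descent relation
  set Rel : ℝ × X → ℝ × X → Prop := fun p q =>
    p.1 ≤ q.1 ∧ q.1 ≤ 1 ∧ q.2 - p.2 ∈ (q.1 - p.1) • B ∧
      f q.2 ≤ f p.2 + ((c * (q.1 - p.1) : ℝ) : EReal) with hRel
  have relRefl : ∀ p : ℝ × X, p.1 ≤ 1 → Rel p p := by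
    intro p hp
    refine ⟨le_rfl, hp, ?_, ?_⟩
    · simp only [sub_self]
      rw [Set.zero_smul_set hBne]
      simp
    · simp
  have relTrans : ∀ {p q s : ℝ × X}, Rel p q → Rel q s → Rel p s := by
    rintro p q s ⟨h1, h2, h3, h4⟩ ⟨h1', h2', h3', h4'⟩
    refine ⟨h1.trans h1', h2', ?_, ?_⟩
    · have hsum : (s.1 - p.1) • B = (q.1 - p.1) • B + (s.1 - q.1) • B := by
        rw [← hBconv.add_smul (by linarith) (by linarith)]
        ring_nf
      rw [hsum]
      have : s.2 - p.2 = (q.2 - p.2) + (s.2 - q.2) := by abel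
      rw [this]
      exact Set.add_mem_add h3 h3'
    · calc f s.2 ≤ f q.2 + ((c * (s.1 - q.1) : ℝ) : EReal) := h4'
        _ ≤ (f p.2 + ((c * (q.1 - p.1) : ℝ) : EReal)) + ((c * (s.1 - q.1) : ℝ) : EReal) :=
            add_le_add_left h4 _
        _ = f p.2 + ((c * (s.1 - p.1) : ℝ) : EReal) := by
            rw [add_assoc, ← EReal.coe_add]
            congr 1
            norm_cast
            ring
  -- the key reduction
  suffices h : ∃ (tb : ℝ) (xb : X), 0 ≤ tb ∧ tb < 1 ∧ xb - a ∈ tb • B ∧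
      f xb ≤ max (f a) (r : EReal) ∧ f xb ≠ ⊤ ∧
      ∀ s : ℝ, 0 < s → s ≤ 1 - tb → ∀ w ∈ A,
        f xb + ((c * s : ℝ) : EReal) ≤ f (xb + s • (w - a)) by
    obtain ⟨tb, xb, ht0, ht1, hgeom, hfle, hftop, hkey⟩ := h
    rw [Set.mem_smul_set] at hgeom
    obtain ⟨b, hbB, hbeq⟩ := hgeom
    obtain ⟨w₀, hw₀, rfl⟩ := hbB
    refine ⟨xb, ⟨tb, ⟨ht0, ht1.le⟩, w₀, hw₀, by rw [hbeq]; abel⟩, hfle, ?_⟩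
    obtain ⟨β, hβ⟩ : ∃ β : ℝ, f xb = (β : EReal) :=
      ⟨(f xb).toReal, (EReal.coe_toReal hftop (hfbot xb)).symm⟩
    have hgoal : ((c : ℝ) : EReal) ≤ mdDeriv f xb B := by
      rw [mdDeriv, Filter.liminf_eq]
      apply le_sSup
      have hmem : Set.Ioo (0 : ℝ) (1 - tb) ∈ nhdsWithin (0 : ℝ) (Set.Ioi 0) :=
        Ioo_mem_nhdsGT_of_mem ⟨le_rfl, by linarith⟩
      filter_upwards [hmem] with s hs
      have hs0 : (0 : ℝ) < s := hs.1
      have hsle : s ≤ 1 - tb := hs.2.le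
      have hInf : ((β + c * s : ℝ) : EReal) ≤
          sInf (f '' ((fun v => xb + s • v) '' B)) := by
        apply le_sInf
        rintro z ⟨y, ⟨v, ⟨w, hw, rfl⟩, rfl⟩, rfl⟩
        have := hkey s hs0 hsle w hw
        rw [hβ, ← EReal.coe_add] at this
        exact this
      have hsub : ((c * s : ℝ) : EReal) ≤
          sInf (f '' ((fun v => xb + s • v) '' B)) - f xb := by
        have h1 := EReal.sub_le_sub hInf (le_refl (f xb))
        rw [hβ, ← EReal.coe_sub] at h1
        have : (β + c * s) - β = c * s := by ring
        rw [this] at h1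
        rwa [hβ]
      calc ((c : ℝ) : EReal) = ((s⁻¹ * (c * s) : ℝ) : EReal) := by
            rw [show s⁻¹ * (c * s) = c by field_simp]
        _ = ((s⁻¹ : ℝ) : EReal) * ((c * s : ℝ) : EReal) := EReal.coe_mul _ _
        _ ≤ ((s⁻¹ : ℝ) : EReal) * (sInf (f '' ((fun v => xb + s • v) '' B)) - f xb) := by
            apply mul_le_mul_of_nonneg_left hsub
            exact_mod_cast (inv_nonneg.mpr hs0.le)
    have : (r : EReal) - f a = ((c : ℝ) : EReal) := by
      rw [hα, ← EReal.coe_sub]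
    rw [this]
    exact hgoal
  -- main dichotomy
  by_cases hcase : ∃ p : ℝ × X, Rel (0, a) p ∧ f p.2 < ((α + c * p.1 : ℝ) : EReal)
  · -- Zorn's lemma case
    obtain ⟨p₀, hp₀rel, hp₀f⟩ := hcase
    have hp₀1 : p₀.1 ≤ 1 := hp₀rel.2.1
    have hp₀0 : 0 ≤ p₀.1 := hp₀rel.1
    have hchains : ∀ Ch : Set {q : ℝ × X // Rel p₀ q},
        IsChain (fun x y : {q : ℝ × X // Rel p₀ q} => Rel x.1 y.1) Ch →
        ∃ ub : {q : ℝ × X // Rel p₀ q}, ∀ x ∈ Ch, Rel x.1 ub.1 := by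
      intro Ch hCh
      rcases Ch.eq_empty_or_nonempty with hE | hNe
      · exact ⟨⟨p₀, relRefl p₀ hp₀1⟩, by simp [hE]⟩
      set ts : Set ℝ := (fun x : {q : ℝ × X // Rel p₀ q} => x.1.1) '' Ch with hts
      have htsne : ts.Nonempty := hNe.image _
      have htsbdd : BddAbove ts := ⟨1, by rintro u ⟨x, hx, rfl⟩; exact x.2.2.1⟩
      set tstar : ℝ := sSup ts with htstar
      have htstar1 : tstar ≤ 1 := csSup_le htsne (by rintro u ⟨x, hx, rfl⟩; exact x.2.2.1)
      have htlestar : ∀ x ∈ Ch, x.1.1 ≤ tstar := fun x hx => le_csSup htsbdd ⟨x, hx, rfl⟩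
      by_cases hatt : ∃ x ∈ Ch, x.1.1 = tstar
      · obtain ⟨p, hpCh, hpt⟩ := hatt
        refine ⟨p, ?_⟩
        intro q hq
        rcases eq_or_ne q p with rfl | hne
        · exact relRefl q.1 q.2.2.1
        rcases hCh hq hpCh (fun h => hne h) with h | h
        · exact h
        · -- Rel p.1 q.1 forces q = p
          have h1 : q.1.1 = tstar := le_antisymm (htlestar q hq) (hpt ▸ h.1)
          have h2 : q.1.2 - p.1.2 ∈ ((q.1.1 - p.1.1) : ℝ) • B := h.2.2.1
          have h3 : q.1.1 - p.1.1 = 0 := by rw [h1, hpt]; ring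
          rw [h3, Set.zero_smul_set hBne] at h2
          have h4 : q.1.2 = p.1.2 := by
            have : q.1.2 - p.1.2 = 0 := h2
            have := sub_eq_zero.mp this
            exact this
          have h5 : q.1 = p.1 := Prod.ext_iff.mpr ⟨by rw [h1, hpt], h4⟩
          rw [h5]
          exact relRefl p.1 p.2.2.1
      · push_neg at hatt
        have hltstar : ∀ x ∈ Ch, x.1.1 < tstar :=
          fun x hx => lt_of_le_of_ne (htlestar x hx) (hatt x hx)
        have hseq : ∀ n : ℕ, ∃ x : {q : ℝ × X // Rel p₀ q},
            x ∈ Ch ∧ tstar - 1/(n+1) < x.1.1 := by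
          intro n
          have hlt' : tstar - 1/(n+1 : ℝ) < tstar := by
            have : (0:ℝ) < 1/(n+1) := by positivity
            linarith
          obtain ⟨u, ⟨x, hx, rfl⟩, hgt⟩ := exists_lt_of_lt_csSup htsne hlt'
          exact ⟨x, hx, hgt⟩
        choose seq hseqCh hseqlt using hseq
        set y : ℕ → X := fun n => (seq n).1.2 with hy'
        set t : ℕ → ℝ := fun n => (seq n).1.1 with ht'
        have htle : ∀ n, t n ≤ tstar := fun n => (hltstar _ (hseqCh n)).le
        set Dm : ℝ := max D 0 with hDm
        have hDb : ∀ b ∈ B, ‖b‖ ≤ Dm := fun b hb => (hD b hb).trans (le_max_left _ _)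
        have hdistB : ∀ m n : ℕ, Rel (seq m).1 (seq n).1 → ‖y n - y m‖ ≤ |t n - t m| * Dm := by
          intro m n hmn
          have h2 := hmn.2.2.1
          rw [Set.mem_smul_set] at h2
          obtain ⟨b, hbB, heq⟩ := h2
          have : y n - y m = (t n - t m) • b := heq.symm
          rw [this, norm_smul]
          have : ‖t n - t m‖ = |t n - t m| := rfl
          rw [this]
          exact mul_le_mul_of_nonneg_left (hDb b hbB) (abs_nonneg _)
        have hdist : ∀ m n : ℕ, ‖y n - y m‖ ≤ |t n - t m| * Dm := by
          intro m n
          rcases eq_or_ne (seq m) (seq n) with he | hne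
          · have hym : y n = y m := by rw [hy']; simp only [← he]
            have htm : t n = t m := by rw [ht']; simp only [← he]
            rw [hym, htm, sub_self, sub_self]
            simp
          rcases hCh (hseqCh m) (hseqCh n) hne with h | h
          · exact hdistB m n h
          · rw [norm_sub_rev, abs_sub_comm]
            exact hdistB n m h
        have hcauchy : CauchySeq y := by
          apply cauchySeq_of_le_tendsto_0 (fun N : ℕ => (1/(N+1)) * Dm)
          · intro m n N hm hn
            have h1 : tstar - 1/(N+1) < t m := by
              have := hseqlt m
              have h2 : (1:ℝ)/(m+1) ≤ 1/(N+1) := by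
                apply one_div_le_one_div_of_le
                · positivity
                · exact_mod_cast by omega
              linarith
            have h1' : tstar - 1/(N+1) < t n := by
              have := hseqlt n
              have h2 : (1:ℝ)/(n+1) ≤ 1/(N+1) := by
                apply one_div_le_one_div_of_le
                · positivity
                · exact_mod_cast by omega
              linarith
            have habs : |t m - t n| ≤ 1/(N+1) := by
              rw [abs_le]
              constructor
              · have := htle n; linarith
              · have := htle m; linarith
            calc dist (y m) (y n) = ‖y m - y n‖ := by rw [dist_eq_norm]
              _ ≤ |t m - t n| * Dm := hdist n m
              _ ≤ (1/(N+1)) * Dm := by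
                  apply mul_le_mul_of_nonneg_right habs (le_max_right _ _)
          · have : Tendsto (fun N : ℕ => (1:ℝ)/(N+1)) atTop (nhds 0) :=
              tendsto_one_div_add_atTop_nhds_zero_nat
            simpa using this.mul_const Dm
        obtain ⟨ystar, hylim⟩ := cauchySeq_tendsto_of_complete hcauchy
        have httlim : Tendsto t atTop (nhds tstar) := by
          apply tendsto_of_tendsto_of_tendsto_of_le_of_le
            (g := fun n : ℕ => tstar - 1/(n+1)) (h := fun _ : ℕ => tstar)
          · have : Tendsto (fun n : ℕ => (1:ℝ)/(n+1)) atTop (nhds 0) :=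
              tendsto_one_div_add_atTop_nhds_zero_nat
            simpa using (tendsto_const_nhds (x := tstar)).sub this
          · exact tendsto_const_nhds
          · exact fun n => (hseqlt n).le
          · exact htle
        have hub : ∀ q ∈ Ch, Rel q.1 (tstar, ystar) := by
          intro q hq
          have hqlt : q.1.1 < tstar := hltstar q hq
          have hd0 : (0:ℝ) < tstar - q.1.1 := by linarith
          have hevgt : ∀ᶠ n in atTop, q.1.1 < t n :=
            httlim.eventually (eventually_gt_nhds hqlt)
          have hevrel : ∀ᶠ n in atTop, Rel q.1 (seq n).1 := by
            filter_upwards [hevgt] with n hn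
            rcases eq_or_ne q (seq n) with he | hne
            · exact he ▸ relRefl (seq n).1 (seq n).2.2.1
            rcases hCh hq (hseqCh n) hne with h | h
            · exact h
            · exact absurd h.1 (not_le.mpr hn)
          refine ⟨hqlt.le, htstar1, ?_, ?_⟩
          · -- geometry
            have hevmem : ∀ᶠ n in atTop, (t n - q.1.1)⁻¹ • (y n - q.1.2) ∈ B := by
              filter_upwards [hevrel, hevgt] with n hn hgt
              have h2 := hn.2.2.1
              rw [Set.mem_smul_set] at h2
              obtain ⟨b, hbB, heq⟩ := h2
              have hne0 : t n - q.1.1 ≠ 0 := by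
                have : q.1.1 < t n := hgt
                intro h; rw [sub_eq_zero] at h; exact absurd h.symm (ne_of_lt this)
              have : (t n - q.1.1)⁻¹ • (y n - q.1.2) = b := by
                rw [← heq, inv_smul_smul₀ hne0]
              rw [this]; exact hbB
            have hlim2 : Tendsto (fun n => (t n - q.1.1)⁻¹ • (y n - q.1.2)) atTop
                (nhds ((tstar - q.1.1)⁻¹ • (ystar - q.1.2))) := by
              apply Tendsto.smul
              · exact ((httlim.sub tendsto_const_nhds).inv₀ (ne_of_gt hd0))
              · exact hylim.sub tendsto_const_nhds
            have hbmem : (tstar - q.1.1)⁻¹ • (ystar - q.1.2) ∈ B :=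
              hBcl.mem_of_tendsto hlim2 hevmem
            rw [Set.mem_smul_set]
            refine ⟨_, hbmem, ?_⟩
            rw [smul_inv_smul₀ (ne_of_gt hd0)]
          · -- f clause
            by_cases hqt : f q.1.2 = ⊤
            · rw [hqt, EReal.top_add_coe]; exact le_top
            obtain ⟨κ, hκ⟩ : ∃ κ : ℝ, f q.1.2 = (κ : EReal) :=
              ⟨(f q.1.2).toReal, (EReal.coe_toReal hqt (hfbot _)).symm⟩
            by_contra hcon
            push_neg at hcon
            rw [hκ, ← EReal.coe_add] at hcon
            obtain ⟨L, hL1, hL2⟩ := EReal.exists_between_coe_real hcon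
            have hev1 : ∀ᶠ n in atTop, (L : EReal) < f (y n) :=
              hylim.eventually (hf ystar (L : EReal) hL2)
            have hev2 : ∀ᶠ n in atTop, f (y n) ≤ ((κ + c * (t n - q.1.1) : ℝ) : EReal) := by
              filter_upwards [hevrel] with n hn
              have h4 := hn.2.2.2
              rw [hκ, ← EReal.coe_add] at h4
              exact h4
            have hev3 : ∀ᶠ n in atTop, κ + c * (t n - q.1.1) < L := by
              have hlim3 : Tendsto (fun n => κ + c * (t n - q.1.1)) atTop
                  (nhds (κ + c * (tstar - q.1.1))) := by
                apply Tendsto.const_add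
                exact (httlim.sub_const q.1.1).const_mul c
              apply hlim3.eventually_lt_const
              exact_mod_cast hL1
            obtain ⟨n, h1, h2, h3⟩ := (hev1.and (hev2.and hev3)).exists
            have : (L : EReal) < (L : EReal) := by
              calc (L : EReal) < f (y n) := h1
                _ ≤ ((κ + c * (t n - q.1.1) : ℝ) : EReal) := h2
                _ < (L : EReal) := by exact_mod_cast h3
            exact absurd this (lt_irrefl _)
        obtain ⟨x₀, hx₀⟩ := hNe
        exact ⟨⟨(tstar, ystar), relTrans x₀.2 (hub x₀ hx₀)⟩, hub⟩
    obtain ⟨m, hm⟩ := exists_maximal_of_chains_bounded hchains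
      (fun {x y z} hxy hyz => relTrans hxy hyz)
    have hRel0m : Rel (0, a) m.1 := relTrans hp₀rel m.2
    set tb : ℝ := m.1.1 with htb
    set xb : X := m.1.2 with hxb
    have ht0 : 0 ≤ tb := hRel0m.1
    have ht1' : tb ≤ 1 := hRel0m.2.1
    have hgeom : xb - a ∈ tb • B := by
      have h := hRel0m.2.2.1
      simpa using h
    have hfxlt : f xb < ((α + c * tb : ℝ) : EReal) := by
      have h4 := m.2.2.2.2
      calc f xb ≤ f p₀.2 + ((c * (tb - p₀.1) : ℝ) : EReal) := h4
        _ < ((α + c * p₀.1 : ℝ) : EReal) + ((c * (tb - p₀.1) : ℝ) : EReal) :=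
            EReal.add_lt_add_right_coe hp₀f _
        _ = ((α + c * tb : ℝ) : EReal) := by
            rw [← EReal.coe_add]
            congr 1
            ring
    have hftop : f xb ≠ ⊤ := ne_top_of_lt hfxlt
    have ht1 : tb < 1 := by
      rcases lt_or_eq_of_le ht1' with h | h
      · exact h
      · exfalso
        have hxbA : xb ∈ A := by
          rw [Set.mem_smul_set] at hgeom
          obtain ⟨b, hbB, heq⟩ := hgeom
          obtain ⟨w, hwA, rfl⟩ := hbB
          have hxbeq : xb = a + tb • (w - a) := by rw [heq]; abel
          rw [hxbeq, h, one_smul]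
          simpa using hwA
        have h1 : (r : EReal) ≤ f xb := hr xb hxbA
        have h2 : f xb < ((α + c * 1 : ℝ) : EReal) := by rw [← h]; exact hfxlt
        have h3 : α + c * 1 = r := by rw [hc]; ring
        rw [h3] at h2
        exact absurd h1 (not_le.mpr h2)
    refine ⟨tb, xb, ht0, ht1, hgeom, ?_, hftop, ?_⟩
    · -- f xb ≤ max (f a) r
      have hreal : α + c * tb ≤ max α r := by
        rcases le_or_gt 0 c with hc0 | hc0
        · have h1 : α + c * tb ≤ α + c := by nlinarith
          have h2 : α + c = r := by rw [hc]; ring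
          rw [h2] at h1
          exact h1.trans (le_max_right _ _)
        · have h1 : α + c * tb ≤ α := by nlinarith
          exact h1.trans (le_max_left _ _)
      rw [hα]
      calc f xb ≤ ((α + c * tb : ℝ) : EReal) := hfxlt.le
        _ ≤ ((max α r : ℝ) : EReal) := by exact_mod_cast hreal
        _ ≤ max ((α : ℝ) : EReal) (r : EReal) := by
            rcases max_cases α r with ⟨h1, _⟩ | ⟨h1, _⟩ <;> rw [h1]
            · exact le_max_left _ _
            · exact le_max_right _ _
    · -- the key directional estimate
      intro s hs0 hsle w hw
      by_contra hlt
      push_neg at hlt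
      set q : ℝ × X := (tb + s, xb + s • (w - a)) with hq
      have hrelmq : Rel m.1 q := by
        have h1 : q.2 - m.1.2 = s • (w - a) := by
          simp only [hq]
          abel
        have h2 : q.1 - m.1.1 = s := by
          simp only [hq]
          ring
        refine ⟨by simp only [hq]; linarith, by simp only [hq]; linarith, ?_, ?_⟩
        · rw [h1, h2]
          exact Set.smul_mem_smul_set ⟨w, hw, rfl⟩
        · rw [h2]
          exact hlt.le
      have := hm ⟨q, relTrans m.2 hrelmq⟩ hrelmq
      have hle : q.1 ≤ m.1.1 := this.1
      simp [hq] at hle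
      linarith
  · -- the point a itself works
    push_neg at hcase
    refine ⟨0, a, le_rfl, one_pos, ?_, ?_, ?_, ?_⟩
    · rw [sub_self, Set.zero_smul_set hBne]; simp
    · rw [hα]; exact le_max_of_le_left le_rfl
    · rw [hα]; exact EReal.coe_ne_top α
    · intro s hs0 hs1 w hw
      by_contra hlt
      push_neg at hlt
      set p : ℝ × X := (s, a + s • (w - a)) with hp
      have hfp : f p.2 < ((α + c * s : ℝ) : EReal) := by
        rw [hα, ← EReal.coe_add] at hlt
        exact hlt
      have hrel : Rel (0, a) p := by
        refine ⟨hs0.le, by simpa using hs1, ?_, ?_⟩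
        · show (a + s • (w - a)) - a ∈ (s - 0) • B
          rw [show (a + s • (w - a)) - a = s • (w - a) by abel,
            show s - (0:ℝ) = s by ring]
          exact Set.smul_mem_smul_set ⟨w, hw, rfl⟩
        · rw [hα]
          have : ((α : ℝ) : EReal) + ((c * (p.1 - 0) : ℝ) : EReal)
              = ((α + c * s : ℝ) : EReal) := by
            rw [← EReal.coe_add]; norm_num; rfl
          rw [this]
          exact hfp.le
      exact absurd hfp (not_lt.mpr (hcase p hrel))
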